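/- arXiv:1106.0535 — 2 statements merged into one kernel-verified Lean document; each statement's English description precedes it below -/
import Mathlib

section
/- In type A_2, the number of marginally large tableaux b of rank 2 with −wt(b) = m α_1 + n α_2 (m, n ≥ 0) equals min(m, n) + 1, and the sum ∑_b (1 − t⁻¹)^{seg(b)} over these tableaux equals the coefficient of z_1^m z_2^n in (1 − t⁻¹z_1)(1 − t⁻¹z_2)(1 − t⁻¹z_1z_2) / ((1 − z_1)(1 − z_2)(1 − z_1z_2)). -/
open MvPowerSeries

/-- Monomials in `ℤ[t⁻¹][[z_1, z_2]]`: `z^{α_1} = z_1`, `z^{α_2} = z_2`,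
`z^{α_1+α_2} = z_1 z_2`. -/
noncomputable def Zm (v : Fin 2 → ℕ) : MvPowerSeries (Fin 2) (Polynomial ℤ) :=
  MvPowerSeries.monomial (R := Polynomial ℤ) (Finsupp.equivFunOnFinite.symm v) 1

/-- `seg(b)` for a rank-2 marginally large tableau encoded by
`(n_{1,2}, n_{2,3}, n_{1,3})`: the number of nonzero entries. -/
def nz3 (c : ℕ × ℕ × ℕ) : ℕ :=
  (if c.1 = 0 then 0 else 1) + (if c.2.1 = 0 then 0 else 1) + (if c.2.2 = 0 then 0 else 1)

/-- The (finite) set of rank-2 marginally large tableaux, encoded as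
`(n_{1,2}, n_{2,3}, n_{1,3})`, with `-wt(b) = m α_1 + n α_2`, i.e.
`n_{1,2} + n_{1,3} = m` and `n_{2,3} + n_{1,3} = n` (all solutions satisfy the box
bounds used below). -/
def wtFiber (m n : ℕ) : Finset (ℕ × ℕ × ℕ) :=
  (Finset.range (m + 1) ×ˢ Finset.range (n + 1) ×ˢ Finset.range (min m n + 1)).filter
    (fun c => c.1 + c.2.2 = m ∧ c.2.1 + c.2.2 = n)


noncomputable section GKaux

open Polynomial

abbrev PZ := Polynomial ℤ

def E2 (a b : ℕ) : Fin 2 →₀ ℕ := Finsupp.equivFunOnFinite.symm ![a, b]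

lemma E2_apply0 (a b : ℕ) : E2 a b 0 = a := by simp [E2]
lemma E2_apply1 (a b : ℕ) : E2 a b 1 = b := by simp [E2]

lemma E2_add (a b c d : ℕ) : E2 a b + E2 c d = E2 (a+c) (b+d) := by
  ext i; fin_cases i <;> simp [E2]

lemma E2_le (a b c d : ℕ) : E2 a b ≤ E2 c d ↔ a ≤ c ∧ b ≤ d := by
  rw [Finsupp.le_def]
  constructor
  · intro h; exact ⟨by simpa [E2] using h 0, by simpa [E2] using h 1⟩
  · rintro ⟨h1, h2⟩ i; fin_cases i <;> simpa [E2]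

lemma E2_sub (a b c d : ℕ) : E2 c d - E2 a b = E2 (c-a) (d-b) := by
  ext i; fin_cases i <;> simp [E2]

lemma E2_eq_zero (a b : ℕ) : E2 a b = 0 ↔ a = 0 ∧ b = 0 := by
  constructor
  · intro h; exact ⟨by rw [← E2_apply0 a b, h]; rfl, by rw [← E2_apply1 a b, h]; rfl⟩
  · rintro ⟨rfl, rfl⟩; ext i; fin_cases i <;> simp [E2]

def psi : MvPowerSeries (Fin 2) PZ := fun v => ((min (v 0) (v 1) + 1 : ℕ) : PZ)

lemma coeff_psi (a b : ℕ) : MvPowerSeries.coeff (R := PZ) (E2 a b) psi = ((min a b + 1 : ℕ) : PZ) := by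
  simp [psi, MvPowerSeries.coeff_apply, E2]

lemma key_coeff (a b m n : ℕ) (r : PZ) :
    MvPowerSeries.coeff (R := PZ) (E2 m n) (MvPowerSeries.monomial (R := PZ) (E2 a b) r * psi) =
      if a ≤ m ∧ b ≤ n then r * ((min (m-a) (n-b) + 1 : ℕ) : PZ) else 0 := by
  rw [MvPowerSeries.coeff_monomial_mul, E2_sub, coeff_psi]
  by_cases h : a ≤ m ∧ b ≤ n
  · rw [if_pos ((E2_le a b m n).mpr h), if_pos h]
  · rw [if_neg (fun hc => h ((E2_le a b m n).mp hc)), if_neg h]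

lemma Zm_eq (a b : ℕ) : Zm ![a, b] = MvPowerSeries.monomial (R := PZ) (E2 a b) 1 := rfl

lemma mono_mul (a b c d : ℕ) (r s : PZ) :
    MvPowerSeries.monomial (R := PZ) (E2 a b) r * MvPowerSeries.monomial (R := PZ) (E2 c d) s =
      MvPowerSeries.monomial (R := PZ) (E2 (a+c) (b+d)) (r*s) := by
  rw [MvPowerSeries.monomial_mul_monomial, E2_add]

lemma Bexp : (1 - Zm ![1,0]) * (1 - Zm ![0,1]) * (1 - Zm ![1,1]) =
    1 - MvPowerSeries.monomial (R := PZ) (E2 1 0) 1 - MvPowerSeries.monomial (R := PZ) (E2 0 1) 1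
      + MvPowerSeries.monomial (R := PZ) (E2 2 1) 1 + MvPowerSeries.monomial (R := PZ) (E2 1 2) 1
      - MvPowerSeries.monomial (R := PZ) (E2 2 2) 1 := by
  have h12 : Zm ![1,0] * Zm ![0,1] = MvPowerSeries.monomial (R := PZ) (E2 1 1) 1 := by
    rw [Zm_eq, Zm_eq, mono_mul]; norm_num
  have h13 : Zm ![1,0] * Zm ![1,1] = MvPowerSeries.monomial (R := PZ) (E2 2 1) 1 := by
    rw [Zm_eq, Zm_eq, mono_mul]; norm_num
  have h23 : Zm ![0,1] * Zm ![1,1] = MvPowerSeries.monomial (R := PZ) (E2 1 2) 1 := by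
    rw [Zm_eq, Zm_eq, mono_mul]; norm_num
  have h33 : MvPowerSeries.monomial (R := PZ) (E2 1 1) (1:PZ) * Zm ![1,1] =
      MvPowerSeries.monomial (R := PZ) (E2 2 2) 1 := by
    rw [Zm_eq, mono_mul]; norm_num
  calc (1 - Zm ![1,0]) * (1 - Zm ![0,1]) * (1 - Zm ![1,1])
      = 1 - Zm ![1,0] - Zm ![0,1] - Zm ![1,1] + Zm ![1,0] * Zm ![0,1]
        + Zm ![1,0] * Zm ![1,1] + Zm ![0,1] * Zm ![1,1]
        - Zm ![1,0] * Zm ![0,1] * Zm ![1,1] := by ring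
    _ = _ := by
        rw [h12, h13, h23, h33]
        simp only [Zm_eq]
        ring

lemma constZm (a b : ℕ) (h : ¬(a = 0 ∧ b = 0)) :
    MvPowerSeries.constantCoeff (σ := Fin 2) (R := PZ) (Zm ![a,b]) = 0 := by
  have : MvPowerSeries.constantCoeff (σ := Fin 2) (R := PZ) (Zm ![a,b]) =
      MvPowerSeries.coeff (R := PZ) 0 (Zm ![a,b]) := rfl
  rw [this, Zm_eq, MvPowerSeries.coeff_monomial, if_neg]
  intro hc
  exact h ((E2_eq_zero a b).mp hc.symm)

lemma constB : MvPowerSeries.constantCoeff (σ := Fin 2) (R := PZ)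
    ((1 - Zm ![1,0]) * (1 - Zm ![0,1]) * (1 - Zm ![1,1])) = 1 := by
  simp [map_mul, map_sub, map_one, constZm, constZm 1 0 (by omega), constZm 0 1 (by omega),
    constZm 1 1 (by omega)]

lemma cast_ite0 (c : Prop) [Decidable c] (x : ℕ) :
    (if c then (x:PZ) else 0) = ((if c then x else 0 : ℕ) : PZ) := by
  split_ifs <;> simp

lemma cast_arith (a b c d e f g : ℕ) (h : a + d + e = b + c + f + g) :
    ((a:PZ)) - (b:PZ) - (c:PZ) + (d:PZ) + (e:PZ) - (f:PZ) = (g:PZ) := by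
  have h' : ((a:PZ)) + (d:PZ) + (e:PZ) = (b:PZ) + (c:PZ) + (f:PZ) + (g:PZ) := by
    exact_mod_cast congrArg (Nat.cast : ℕ → PZ) h
  linear_combination h'

lemma psiB : ((1 - Zm ![1,0]) * (1 - Zm ![0,1]) * (1 - Zm ![1,1])) * psi = 1 := by
  rw [Bexp]
  apply MvPowerSeries.ext
  intro v
  have hv : v = E2 (v 0) (v 1) := by ext i; fin_cases i <;> simp [E2]
  rw [hv]
  set m := v 0 with hm
  set n := v 1 with hn
  clear_value m n
  have hd : (1 - MvPowerSeries.monomial (R := PZ) (E2 1 0) (1:PZ) - MvPowerSeries.monomial (R := PZ) (E2 0 1) 1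
      + MvPowerSeries.monomial (R := PZ) (E2 2 1) 1 + MvPowerSeries.monomial (R := PZ) (E2 1 2) 1
      - MvPowerSeries.monomial (R := PZ) (E2 2 2) 1) * psi =
      psi - MvPowerSeries.monomial (R := PZ) (E2 1 0) 1 * psi - MvPowerSeries.monomial (R := PZ) (E2 0 1) 1 * psi
      + MvPowerSeries.monomial (R := PZ) (E2 2 1) 1 * psi + MvPowerSeries.monomial (R := PZ) (E2 1 2) 1 * psi
      - MvPowerSeries.monomial (R := PZ) (E2 2 2) 1 * psi := by ring
  rw [hd]
  simp only [map_sub, map_add, key_coeff, coeff_psi, MvPowerSeries.coeff_one, one_mul,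
    Nat.sub_zero, Nat.zero_le, true_and, and_true]
  have hG : (if E2 m n = 0 then (1:PZ) else 0) = ((if m = 0 ∧ n = 0 then 1 else 0 : ℕ) : PZ) := by
    by_cases h : m = 0 ∧ n = 0
    · rw [if_pos ((E2_eq_zero m n).mpr h), if_pos h]; norm_num
    · rw [if_neg (fun hc => h ((E2_eq_zero m n).mp hc)), if_neg h]; norm_num
  rw [hG, cast_ite0, cast_ite0, cast_ite0, cast_ite0, cast_ite0]
  apply cast_arith
  split_ifs <;> omega

lemma invpsi : MvPowerSeries.invOfUnit
    ((1 - Zm ![1,0]) * (1 - Zm ![0,1]) * (1 - Zm ![1,1])) 1 = psi := by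
  set B := (1 - Zm ![1,0]) * (1 - Zm ![0,1]) * (1 - Zm ![1,1]) with hB
  have h1 : B * MvPowerSeries.invOfUnit B 1 = 1 :=
    MvPowerSeries.mul_invOfUnit B 1 (by rw [constB]; rfl)
  have h2 : psi = MvPowerSeries.invOfUnit B 1 := calc
    psi = psi * (B * MvPowerSeries.invOfUnit B 1) := by rw [h1, mul_one]
    _ = (B * psi) * MvPowerSeries.invOfUnit B 1 := by ring
    _ = MvPowerSeries.invOfUnit B 1 := by rw [psiB, one_mul]
  exact h2.symm


lemma CXZm (a b : ℕ) :
    MvPowerSeries.C (σ := Fin 2) (R := Polynomial ℤ) Polynomial.X * Zm ![a,b] =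
      MvPowerSeries.monomial (R := PZ) (E2 a b) Polynomial.X := by
  rw [Zm_eq, show (MvPowerSeries.C (σ := Fin 2) (R := Polynomial ℤ)) Polynomial.X =
    MvPowerSeries.monomial (R := PZ) (0 : Fin 2 →₀ ℕ) Polynomial.X from rfl,
    MvPowerSeries.monomial_mul_monomial, zero_add, mul_one]

lemma Aexp :
    (1 - MvPowerSeries.C (σ := Fin 2) (R := Polynomial ℤ) Polynomial.X * Zm ![1, 0]) *
      (1 - MvPowerSeries.C (σ := Fin 2) (R := Polynomial ℤ) Polynomial.X * Zm ![0, 1]) *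
      (1 - MvPowerSeries.C (σ := Fin 2) (R := Polynomial ℤ) Polynomial.X * Zm ![1, 1]) =
    1 - MvPowerSeries.monomial (R := PZ) (E2 1 0) Polynomial.X
      - MvPowerSeries.monomial (R := PZ) (E2 0 1) Polynomial.X
      + MvPowerSeries.monomial (R := PZ) (E2 1 1) (Polynomial.X^2)
      - MvPowerSeries.monomial (R := PZ) (E2 1 1) Polynomial.X
      + MvPowerSeries.monomial (R := PZ) (E2 2 1) (Polynomial.X^2)
      + MvPowerSeries.monomial (R := PZ) (E2 1 2) (Polynomial.X^2)
      - MvPowerSeries.monomial (R := PZ) (E2 2 2) (Polynomial.X^3) := by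
  rw [CXZm, CXZm, CXZm]
  have hab : MvPowerSeries.monomial (R := PZ) (E2 1 0) Polynomial.X *
      MvPowerSeries.monomial (R := PZ) (E2 0 1) Polynomial.X =
      MvPowerSeries.monomial (R := PZ) (E2 1 1) (Polynomial.X^2) := by
    rw [mono_mul, ← sq]
  have hac : MvPowerSeries.monomial (R := PZ) (E2 1 0) Polynomial.X *
      MvPowerSeries.monomial (R := PZ) (E2 1 1) Polynomial.X =
      MvPowerSeries.monomial (R := PZ) (E2 2 1) (Polynomial.X^2) := by
    rw [mono_mul, ← sq]
  have hbc : MvPowerSeries.monomial (R := PZ) (E2 0 1) Polynomial.X *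
      MvPowerSeries.monomial (R := PZ) (E2 1 1) Polynomial.X =
      MvPowerSeries.monomial (R := PZ) (E2 1 2) (Polynomial.X^2) := by
    rw [mono_mul, ← sq]
  have habc : MvPowerSeries.monomial (R := PZ) (E2 1 1) (Polynomial.X^2) *
      MvPowerSeries.monomial (R := PZ) (E2 1 1) Polynomial.X =
      MvPowerSeries.monomial (R := PZ) (E2 2 2) (Polynomial.X^3) := by
    rw [mono_mul, ← pow_succ]
  calc (1 - MvPowerSeries.monomial (R := PZ) (E2 1 0) Polynomial.X) *
      (1 - MvPowerSeries.monomial (R := PZ) (E2 0 1) Polynomial.X) *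
      (1 - MvPowerSeries.monomial (R := PZ) (E2 1 1) Polynomial.X)
      = 1 - MvPowerSeries.monomial (R := PZ) (E2 1 0) Polynomial.X
        - MvPowerSeries.monomial (R := PZ) (E2 0 1) Polynomial.X
        - MvPowerSeries.monomial (R := PZ) (E2 1 1) Polynomial.X
        + MvPowerSeries.monomial (R := PZ) (E2 1 0) Polynomial.X *
            MvPowerSeries.monomial (R := PZ) (E2 0 1) Polynomial.X
        + MvPowerSeries.monomial (R := PZ) (E2 1 0) Polynomial.X *
            MvPowerSeries.monomial (R := PZ) (E2 1 1) Polynomial.X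
        + MvPowerSeries.monomial (R := PZ) (E2 0 1) Polynomial.X *
            MvPowerSeries.monomial (R := PZ) (E2 1 1) Polynomial.X
        - MvPowerSeries.monomial (R := PZ) (E2 1 0) Polynomial.X *
            MvPowerSeries.monomial (R := PZ) (E2 0 1) Polynomial.X *
            MvPowerSeries.monomial (R := PZ) (E2 1 1) Polynomial.X := by ring
    _ = _ := by rw [hab, hac, hbc, habc]; ring

lemma coeffA (m n : ℕ) :
    MvPowerSeries.coeff (R := PZ) (E2 m n)
      ((1 - MvPowerSeries.C (σ := Fin 2) (R := Polynomial ℤ) Polynomial.X * Zm ![1, 0]) *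
        (1 - MvPowerSeries.C (σ := Fin 2) (R := Polynomial ℤ) Polynomial.X * Zm ![0, 1]) *
        (1 - MvPowerSeries.C (σ := Fin 2) (R := Polynomial ℤ) Polynomial.X * Zm ![1, 1]) * psi) =
    ((min m n + 1 : ℕ) : PZ)
      - (if 1 ≤ m then Polynomial.X * ((min (m-1) n + 1 : ℕ) : PZ) else 0)
      - (if 1 ≤ n then Polynomial.X * ((min m (n-1) + 1 : ℕ) : PZ) else 0)
      + (if 1 ≤ m ∧ 1 ≤ n then Polynomial.X^2 * ((min (m-1) (n-1) + 1 : ℕ) : PZ) else 0)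
      - (if 1 ≤ m ∧ 1 ≤ n then Polynomial.X * ((min (m-1) (n-1) + 1 : ℕ) : PZ) else 0)
      + (if 2 ≤ m ∧ 1 ≤ n then Polynomial.X^2 * ((min (m-2) (n-1) + 1 : ℕ) : PZ) else 0)
      + (if 1 ≤ m ∧ 2 ≤ n then Polynomial.X^2 * ((min (m-1) (n-2) + 1 : ℕ) : PZ) else 0)
      - (if 2 ≤ m ∧ 2 ≤ n then Polynomial.X^3 * ((min (m-2) (n-2) + 1 : ℕ) : PZ) else 0) := by
  rw [Aexp]
  have hd : (1 - MvPowerSeries.monomial (R := PZ) (E2 1 0) Polynomial.X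
      - MvPowerSeries.monomial (R := PZ) (E2 0 1) Polynomial.X
      + MvPowerSeries.monomial (R := PZ) (E2 1 1) (Polynomial.X^2)
      - MvPowerSeries.monomial (R := PZ) (E2 1 1) Polynomial.X
      + MvPowerSeries.monomial (R := PZ) (E2 2 1) (Polynomial.X^2)
      + MvPowerSeries.monomial (R := PZ) (E2 1 2) (Polynomial.X^2)
      - MvPowerSeries.monomial (R := PZ) (E2 2 2) (Polynomial.X^3)) * psi =
      psi - MvPowerSeries.monomial (R := PZ) (E2 1 0) Polynomial.X * psi
      - MvPowerSeries.monomial (R := PZ) (E2 0 1) Polynomial.X * psi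
      + MvPowerSeries.monomial (R := PZ) (E2 1 1) (Polynomial.X^2) * psi
      - MvPowerSeries.monomial (R := PZ) (E2 1 1) Polynomial.X * psi
      + MvPowerSeries.monomial (R := PZ) (E2 2 1) (Polynomial.X^2) * psi
      + MvPowerSeries.monomial (R := PZ) (E2 1 2) (Polynomial.X^2) * psi
      - MvPowerSeries.monomial (R := PZ) (E2 2 2) (Polynomial.X^3) * psi := by ring
  rw [hd]
  simp only [map_sub, map_add, key_coeff, coeff_psi, Nat.sub_zero, Nat.zero_le, true_and, and_true]


lemma Lsum (m n u : ℕ) (hm : u + 1 ≤ m) (hn : u + 1 ≤ n) :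
    (∑ k ∈ Finset.range (u + 2),
      ((1:PZ) - Polynomial.X) ^
        ((if m - k = 0 then 0 else 1) + (if n - k = 0 then 0 else 1) + (if k = 0 then 0 else 1)))
    = ((1:PZ) - Polynomial.X)^2 + (u : PZ) * ((1:PZ) - Polynomial.X)^3
      + ((1:PZ) - Polynomial.X) ^
          ((if m - (u+1) = 0 then 0 else 1) + (if n - (u+1) = 0 then 0 else 1) + 1) := by
  rw [Finset.sum_range_succ, Finset.sum_range_succ']
  have hmid : ∀ k ∈ Finset.range u,
      ((1:PZ) - Polynomial.X) ^
        ((if m - (k+1) = 0 then 0 else 1) + (if n - (k+1) = 0 then 0 else 1)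
          + (if k+1 = 0 then 0 else 1)) = ((1:PZ) - Polynomial.X)^3 := by
    intro k hk
    rw [Finset.mem_range] at hk
    rw [if_neg (by omega), if_neg (by omega), if_neg (by omega)]
  rw [Finset.sum_congr rfl hmid, Finset.sum_const, Finset.card_range]
  have h0 : ((1:PZ) - Polynomial.X) ^
      ((if m - 0 = 0 then 0 else 1) + (if n - 0 = 0 then 0 else 1) + (if (0:ℕ) = 0 then 0 else 1))
      = ((1:PZ) - Polynomial.X)^2 := by
    rw [if_neg (by omega), if_neg (by omega), if_pos rfl]
  have h1 : ((1:PZ) - Polynomial.X) ^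
      ((if m - (u+1) = 0 then 0 else 1) + (if n - (u+1) = 0 then 0 else 1)
        + (if u+1 = 0 then 0 else 1))
      = ((1:PZ) - Polynomial.X) ^
      ((if m - (u+1) = 0 then 0 else 1) + (if n - (u+1) = 0 then 0 else 1) + 1) := by
    rw [if_neg (by omega : ¬(u+1 = 0))]
  rw [h0, h1, nsmul_eq_mul]
  ring

lemma main_id (m n : ℕ) :
    (∑ k ∈ Finset.range (min m n + 1),
      ((1:PZ) - Polynomial.X) ^
        ((if m - k = 0 then 0 else 1) + (if n - k = 0 then 0 else 1) + (if k = 0 then 0 else 1)))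
    = ((min m n + 1 : ℕ) : PZ)
      - (if 1 ≤ m then Polynomial.X * ((min (m-1) n + 1 : ℕ) : PZ) else 0)
      - (if 1 ≤ n then Polynomial.X * ((min m (n-1) + 1 : ℕ) : PZ) else 0)
      + (if 1 ≤ m ∧ 1 ≤ n then Polynomial.X^2 * ((min (m-1) (n-1) + 1 : ℕ) : PZ) else 0)
      - (if 1 ≤ m ∧ 1 ≤ n then Polynomial.X * ((min (m-1) (n-1) + 1 : ℕ) : PZ) else 0)
      + (if 2 ≤ m ∧ 1 ≤ n then Polynomial.X^2 * ((min (m-2) (n-1) + 1 : ℕ) : PZ) else 0)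
      + (if 1 ≤ m ∧ 2 ≤ n then Polynomial.X^2 * ((min (m-1) (n-2) + 1 : ℕ) : PZ) else 0)
      - (if 2 ≤ m ∧ 2 ≤ n then Polynomial.X^3 * ((min (m-2) (n-2) + 1 : ℕ) : PZ) else 0) := by
  rcases Nat.eq_zero_or_pos m with rfl | hm
  · rw [Nat.zero_min, Finset.sum_range_one]
    rcases Nat.eq_zero_or_pos n with rfl | hn
    · norm_num
    · rw [if_neg (by omega : ¬(n - 0 = 0)),
        if_neg (by omega : ¬(1 ≤ 0)), if_pos (by omega : 1 ≤ n),
        if_neg (by omega : ¬(1 ≤ 0 ∧ 1 ≤ n)), if_neg (by omega : ¬(1 ≤ 0 ∧ 1 ≤ n)),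
        if_neg (by omega : ¬(2 ≤ 0 ∧ 1 ≤ n)), if_neg (by omega : ¬(1 ≤ 0 ∧ 2 ≤ n)),
        if_neg (by omega : ¬(2 ≤ 0 ∧ 2 ≤ n)),
        show min 0 (n-1) + 1 = 1 from by omega]
      push_cast
      ring
  · rcases Nat.eq_zero_or_pos n with rfl | hn
    · rw [Nat.min_zero, Finset.sum_range_one]
      rw [if_neg (by omega : ¬(m - 0 = 0)),
        if_pos (by omega : 1 ≤ m), if_neg (by omega : ¬(1 ≤ 0)),
        if_neg (by omega : ¬(1 ≤ m ∧ 1 ≤ 0)), if_neg (by omega : ¬(1 ≤ m ∧ 1 ≤ 0)),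
        if_neg (by omega : ¬(2 ≤ m ∧ 1 ≤ 0)), if_neg (by omega : ¬(1 ≤ m ∧ 2 ≤ 0)),
        if_neg (by omega : ¬(2 ≤ m ∧ 2 ≤ 0)),
        show min (m-1) 0 + 1 = 1 from by omega]
      push_cast
      ring
    · rcases lt_trichotomy m n with h | h | h
      · -- m < n
        obtain ⟨e, rfl⟩ : ∃ e, m = e + 1 := ⟨m - 1, by omega⟩
        rcases Nat.eq_zero_or_pos e with rfl | he
        · -- m = 1 < n
          rw [show min (0+1) (n) + 1 = (0) + 2 from by omega,
            Lsum _ _ _ (by omega) (by omega),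
            if_pos (by omega : 0+1 - ((0)+1) = 0),
            if_neg (by omega : ¬(n - ((0)+1) = 0)),
            if_pos (by omega : 1 ≤ 0+1), if_pos (by omega : 1 ≤ n),
            if_pos (by omega : 1 ≤ 0+1 ∧ 1 ≤ n), if_pos (by omega : 1 ≤ 0+1 ∧ 1 ≤ n),
            if_neg (by omega : ¬(2 ≤ 0+1 ∧ 1 ≤ n)),
            if_pos (by omega : 1 ≤ 0+1 ∧ 2 ≤ n),
            if_neg (by omega : ¬(2 ≤ 0+1 ∧ 2 ≤ n))]
          rw [show min (0+1-1) (n) + 1 = 1 from by omega,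
            show min (0+1) (n-1) + 1 = 2 from by omega,
            show min (0+1-1) (n-1) + 1 = 1 from by omega,
            show min (0+1-1) (n-2) + 1 = 1 from by omega]
          push_cast
          ring
        · -- 2 ≤ m < n
          rw [show min (e+1) (n) + 1 = (e) + 2 from by omega,
            Lsum _ _ _ (by omega) (by omega),
            if_pos (by omega : e+1 - ((e)+1) = 0),
            if_neg (by omega : ¬(n - ((e)+1) = 0)),
            if_pos (by omega : 1 ≤ e+1), if_pos (by omega : 1 ≤ n),
            if_pos (by omega : 1 ≤ e+1 ∧ 1 ≤ n), if_pos (by omega : 1 ≤ e+1 ∧ 1 ≤ n),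
            if_pos (by omega : 2 ≤ e+1 ∧ 1 ≤ n),
            if_pos (by omega : 1 ≤ e+1 ∧ 2 ≤ n),
            if_pos (by omega : 2 ≤ e+1 ∧ 2 ≤ n)]
          rw [show min (e+1-1) (n) + 1 = e+1 from by omega,
            show min (e+1) (n-1) + 1 = e+2 from by omega,
            show min (e+1-1) (n-1) + 1 = e+1 from by omega,
            show min (e+1-2) (n-1) + 1 = e from by omega,
            show min (e+1-1) (n-2) + 1 = e+1 from by omega,
            show min (e+1-2) (n-2) + 1 = e from by omega]
          push_cast
          ring
      · -- m = n
        subst h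
        rcases Nat.eq_zero_or_pos (m - 1) with h1 | h1
        · -- m = n = 1
          obtain rfl : m = 1 := by omega
          rw [show min (1) (1) + 1 = (0) + 2 from by omega,
            Lsum _ _ _ (by omega) (by omega),
            if_pos (by omega : 1 ≤ 1), if_pos (by omega : 1 ≤ 1),
            if_pos (by omega : 1 ≤ 1 ∧ 1 ≤ 1), if_pos (by omega : 1 ≤ 1 ∧ 1 ≤ 1),
            if_neg (by omega : ¬(2 ≤ 1 ∧ 1 ≤ 1)),
            if_neg (by omega : ¬(1 ≤ 1 ∧ 2 ≤ 1)),
            if_neg (by omega : ¬(2 ≤ 1 ∧ 2 ≤ 1))]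
          rw [show min (1-1) (1) + 1 = 1 from by omega,
            show min (1) (1-1) + 1 = 1 from by omega,
            show min (1-1) (1-1) + 1 = 1 from by omega]
          push_cast
          ring
        · -- m = n ≥ 2
          obtain ⟨e, rfl⟩ : ∃ e, m = e + 2 := ⟨m - 2, by omega⟩
          rw [show min (e+2) (e+2) + 1 = (e+1) + 2 from by omega,
            Lsum _ _ _ (by omega) (by omega),
            if_pos (by omega : 1 ≤ e+2), if_pos (by omega : 1 ≤ e+2),
            if_pos (by omega : 1 ≤ e+2 ∧ 1 ≤ e+2), if_pos (by omega : 1 ≤ e+2 ∧ 1 ≤ e+2),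
            if_pos (by omega : 2 ≤ e+2 ∧ 1 ≤ e+2),
            if_pos (by omega : 1 ≤ e+2 ∧ 2 ≤ e+2),
            if_pos (by omega : 2 ≤ e+2 ∧ 2 ≤ e+2)]
          rw [show min (e+2-1) (e+2) + 1 = e+2 from by omega,
            show min (e+2) (e+2-1) + 1 = e+2 from by omega,
            show min (e+2-1) (e+2-1) + 1 = e+2 from by omega,
            show min (e+2-2) (e+2-1) + 1 = e+1 from by omega,
            show min (e+2-1) (e+2-2) + 1 = e+1 from by omega,
            show min (e+2-2) (e+2-2) + 1 = e+1 from by omega]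
          simp only [Nat.sub_self]
          push_cast
          ring
      · -- n < m
        obtain ⟨e, rfl⟩ : ∃ e, n = e + 1 := ⟨n - 1, by omega⟩
        rcases Nat.eq_zero_or_pos e with rfl | he
        · -- n = 1 < m
          rw [show min (m) (0+1) + 1 = (0) + 2 from by omega,
            Lsum _ _ _ (by omega) (by omega),
            if_neg (by omega : ¬(m - ((0)+1) = 0)),
            if_pos (by omega : 0+1 - ((0)+1) = 0),
            if_pos (by omega : 1 ≤ m), if_pos (by omega : 1 ≤ 0+1),
            if_pos (by omega : 1 ≤ m ∧ 1 ≤ 0+1), if_pos (by omega : 1 ≤ m ∧ 1 ≤ 0+1),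
            if_pos (by omega : 2 ≤ m ∧ 1 ≤ 0+1),
            if_neg (by omega : ¬(1 ≤ m ∧ 2 ≤ 0+1)),
            if_neg (by omega : ¬(2 ≤ m ∧ 2 ≤ 0+1))]
          rw [show min (m-1) (0+1) + 1 = 2 from by omega,
            show min (m) (0+1-1) + 1 = 1 from by omega,
            show min (m-1) (0+1-1) + 1 = 1 from by omega,
            show min (m-2) (0+1-1) + 1 = 1 from by omega]
          push_cast
          ring
        · -- 2 ≤ n < m
          rw [show min (m) (e+1) + 1 = (e) + 2 from by omega,
            Lsum _ _ _ (by omega) (by omega),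
            if_neg (by omega : ¬(m - ((e)+1) = 0)),
            if_pos (by omega : e+1 - ((e)+1) = 0),
            if_pos (by omega : 1 ≤ m), if_pos (by omega : 1 ≤ e+1),
            if_pos (by omega : 1 ≤ m ∧ 1 ≤ e+1), if_pos (by omega : 1 ≤ m ∧ 1 ≤ e+1),
            if_pos (by omega : 2 ≤ m ∧ 1 ≤ e+1),
            if_pos (by omega : 1 ≤ m ∧ 2 ≤ e+1),
            if_pos (by omega : 2 ≤ m ∧ 2 ≤ e+1)]
          rw [show min (m-1) (e+1) + 1 = e+2 from by omega,
            show min (m) (e+1-1) + 1 = e+1 from by omega,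
            show min (m-1) (e+1-1) + 1 = e+1 from by omega,
            show min (m-2) (e+1-1) + 1 = e+1 from by omega,
            show min (m-1) (e+1-2) + 1 = e from by omega,
            show min (m-2) (e+1-2) + 1 = e from by omega]
          push_cast
          ring

lemma wtFiber_eq (m n : ℕ) :
    wtFiber m n = (Finset.range (min m n + 1)).image (fun k => (m - k, n - k, k)) := by
  ext c
  obtain ⟨a, b, k⟩ := c
  simp only [wtFiber, Finset.mem_filter, Finset.mem_product, Finset.mem_range,
    Finset.mem_image, Prod.mk.injEq]
  constructor
  · rintro ⟨⟨h1, h2, h3⟩, h4, h5⟩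
    exact ⟨k, by omega, by omega, by omega, rfl⟩
  · rintro ⟨j, hj, h1, h2, h3⟩
    refine ⟨⟨by omega, by omega, by omega⟩, by omega, by omega⟩

lemma triple_inj (m n : ℕ) : Function.Injective (fun k => (m - k, n - k, k)) := by
  intro a b h
  simpa using congrArg (fun c : ℕ × ℕ × ℕ => c.2.2) h

end GKaux

/-- in type `A_2`, the number of marginally large tableaux with
`-wt(b) = m α_1 + n α_2` is `min(m,n) + 1`, and `∑_b (1 - t⁻¹)^{seg(b)}` over these
tableaux equals the coefficient of `z_1^m z_2^n` in
`(1-t⁻¹z_1)(1-t⁻¹z_2)(1-t⁻¹z_1z_2)/((1-z_1)(1-z_2)(1-z_1z_2))`. -/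
theorem gk_A2_coefficients (m n : ℕ) :
    (wtFiber m n).card = min m n + 1 ∧
    (∑ c ∈ wtFiber m n, ((1 : Polynomial ℤ) - Polynomial.X) ^ nz3 c) =
      MvPowerSeries.coeff (R := Polynomial ℤ) (Finsupp.equivFunOnFinite.symm ![m, n])
        ((1 - MvPowerSeries.C (σ := Fin 2) (R := Polynomial ℤ) Polynomial.X * Zm ![1, 0]) *
         (1 - MvPowerSeries.C (σ := Fin 2) (R := Polynomial ℤ) Polynomial.X * Zm ![0, 1]) *
         (1 - MvPowerSeries.C (σ := Fin 2) (R := Polynomial ℤ) Polynomial.X * Zm ![1, 1]) *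
         MvPowerSeries.invOfUnit
           ((1 - Zm ![1, 0]) * (1 - Zm ![0, 1]) * (1 - Zm ![1, 1])) 1) := by
  constructor
  · rw [wtFiber_eq, Finset.card_image_of_injective _ (triple_inj m n), Finset.card_range]
  · rw [wtFiber_eq, Finset.sum_image (fun a _ b _ h => triple_inj m n h), invpsi,
      show Finsupp.equivFunOnFinite.symm ![m, n] = E2 m n from rfl, coeffA]
    simp only [nz3]
    exact main_id m n
end

section
/- Every indecomposable finite-dimensional representation of the linearly oriented A_r quiver 1 ← 2 ← … ← r is isomorphic to V(k,ℓ) for a unique pair 1 ≤ k ≤ ℓ ≤ r (Gabriel's theorem in type A for the linear orientation). -/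
/-- The interval representation `V(k,ℓ)` of the linearly oriented `A_r` quiver
`1 ← 2 ← ⋯ ← r`: vertex `i` carries `ℂ` if `k ≤ i ≤ ℓ` and `0` otherwise (realized as
the submodules `⊤`, `⊥` of `ℂ`). -/
noncomputable def intervalSpace {r : ℕ} (k ℓ : Fin r) (i : Fin r) : Submodule ℂ ℂ :=
  if k ≤ i ∧ i ≤ ℓ then ⊤ else ⊥

/-- The structure map of `V(k,ℓ)` along the arrow `i+1 → i`: the identity between
consecutive nonzero spaces, and `0` otherwise. -/
noncomputable def intervalMap {r : ℕ} (k ℓ : Fin r) (i : Fin r) (h : i.1 + 1 < r) :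
    intervalSpace k ℓ ⟨i.1 + 1, h⟩ →ₗ[ℂ] intervalSpace k ℓ i where
  toFun v :=
    if hc : k.1 ≤ i.1 ∧ i.1 + 1 ≤ ℓ.1 then
      ⟨v.1, by
        have : k ≤ i ∧ i ≤ ℓ :=
          ⟨Fin.le_def.mpr hc.1, Fin.le_def.mpr (by omega)⟩
        simp [intervalSpace, this]⟩
    else 0
  map_add' a b := by split_ifs <;> simp
  map_smul' c a := by split_ifs <;> simp

namespace GabrielAux

variable {r : ℕ} (V : Fin r → Type) [∀ i, AddCommGroup (V i)] [∀ i, Module ℂ (V i)]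
  (x : ∀ (i : Fin r) (h : i.1 + 1 < r), V ⟨i.1 + 1, h⟩ →ₗ[ℂ] V i)

/-- Composite of the chain maps from vertex `m` down to vertex `i` (junk `0` if `m < i`). -/
noncomputable def cc (i : Fin r) : (m : ℕ) → (hm : m < r) → (V ⟨m, hm⟩ →ₗ[ℂ] V i)
  | 0, hm => if h : i = ⟨0, hm⟩ then (by subst h; exact LinearMap.id) else 0
  | (m+1), hm =>
      if h : i = ⟨m+1, hm⟩ then (by subst h; exact LinearMap.id)
      else if hle : i.1 ≤ m then (cc i m (by omega)).comp (x ⟨m, by omega⟩ hm) else 0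

lemma cc_self (i : Fin r) (hm : i.1 < r) : cc V x i i.1 hm = LinearMap.id := by
  obtain ⟨iv, hi⟩ := i
  cases iv with
  | zero => simp [cc]
  | succ m => simp [cc]

lemma cc_succ (i : Fin r) (m : ℕ) (hm : m + 1 < r) (hle : i.1 ≤ m) :
    cc V x i (m+1) hm = (cc V x i m (by omega)).comp (x ⟨m, by omega⟩ hm) := by
  rw [cc]
  rw [dif_neg (by intro h; subst h; simp at hle), dif_pos hle]

lemma cc_junk (i : Fin r) (m : ℕ) (hm : m < r) (hj : m < i.1) : cc V x i m hm = 0 := by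
  cases m with
  | zero => rw [cc, dif_neg (by intro h; subst h; simp at hj)]
  | succ m =>
      rw [cc, dif_neg (by intro h; subst h; simp at hj), dif_neg (by omega)]

lemma cc_trans (i j : Fin r) (hij : i ≤ j) (m : ℕ) (hm : m < r) (hjm : j.1 ≤ m) :
    cc V x i m hm = (cc V x i j.1 j.isLt).comp (cc V x j m hm) := by
  induction m with
  | zero =>
      have hij0 : i = j := Fin.ext (by have := Fin.le_def.mp hij; omega)
      subst hij0
      rw [cc_self, LinearMap.id_comp]
  | succ m ih =>
      rcases Nat.lt_or_ge j.1 (m+1) with hlt | hge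
      · have hle : j.1 ≤ m := by omega
        have hle' : i.1 ≤ m := by have := Fin.le_def.mp hij; omega
        rw [cc_succ V x i m hm hle', cc_succ V x j m hm hle, ih (by omega) hle,
          LinearMap.comp_assoc]
      · obtain ⟨jv, hj⟩ := j
        have hv : jv = m + 1 := by simp at hjm hge ⊢; omega
        subst hv
        rw [cc_self, LinearMap.comp_id]

lemma cc_bot (i : Fin r) (h : i.1 + 1 < r) (m : ℕ) (hm : m < r) (him : i.1 + 1 ≤ m) :
    cc V x i m hm = (x i h).comp (cc V x ⟨i.1 + 1, h⟩ m hm) := by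
  induction m with
  | zero => omega
  | succ m ih =>
      rcases Nat.lt_or_ge (i.1+1) (m+1) with hlt | hge
      · have h1 : i.1 ≤ m := by omega
        have h2 : (⟨i.1 + 1, h⟩ : Fin r).1 ≤ m := by simp; omega
        rw [cc_succ V x i m hm h1, ih (by omega) (by omega),
          cc_succ V x ⟨i.1 + 1, h⟩ m hm h2, LinearMap.comp_assoc]
      · obtain ⟨iv, hi⟩ := i
        have hv : iv = m := by simp at hge him ⊢; omega
        subst hv
        rw [cc_succ V x ⟨iv, hi⟩ iv hm (le_refl _), cc_self]
        rw [cc_self, LinearMap.id_comp, LinearMap.comp_id]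

lemma isCompl_span_ker {M : Type} [AddCommGroup M] [Module ℂ M] (f : M →ₗ[ℂ] ℂ) (w : M)
    (hf : f w = 1) : IsCompl (ℂ ∙ w) (LinearMap.ker f) := by
  constructor
  · rw [Submodule.disjoint_def]
    intro a ha hk
    obtain ⟨c, rfl⟩ := Submodule.mem_span_singleton.mp ha
    have hc : c * f w = 0 := by simpa using hk
    rw [hf, mul_one] at hc
    simp [hc]
  · rw [codisjoint_iff, eq_top_iff]
    intro a _
    have h1 : a - f a • w ∈ LinearMap.ker f := by simp [hf]
    have h2 : f a • w ∈ ℂ ∙ w := Submodule.smul_mem _ _ (Submodule.mem_span_singleton_self w)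
    simpa using Submodule.add_mem_sup h2 h1

end GabrielAux

/-- Gabriel's theorem, type `A`, linear orientation: every nonzero
indecomposable finite-dimensional `ℂ`-representation of the quiver `1 ← 2 ← ⋯ ← r`
is isomorphic to the interval representation `V(k,ℓ)` for a unique pair `k ≤ ℓ`.
Indecomposability is phrased as: in every direct-sum decomposition into two
subrepresentations, one summand is zero. -/
theorem gabriel_typeA_linear (r : ℕ)
    (V : Fin r → Type) [∀ i, AddCommGroup (V i)] [∀ i, Module ℂ (V i)]
    [∀ i, FiniteDimensional ℂ (V i)]
    (x : ∀ (i : Fin r) (h : i.1 + 1 < r), V ⟨i.1 + 1, h⟩ →ₗ[ℂ] V i)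
    (hnz : ∃ i, Nontrivial (V i))
    (hind : ∀ W W' : ∀ i, Submodule ℂ (V i),
      (∀ (i : Fin r) (h : i.1 + 1 < r), Submodule.map (x i h) (W ⟨i.1 + 1, h⟩) ≤ W i) →
      (∀ (i : Fin r) (h : i.1 + 1 < r), Submodule.map (x i h) (W' ⟨i.1 + 1, h⟩) ≤ W' i) →
      (∀ i, IsCompl (W i) (W' i)) →
      (∀ i, W i = ⊥) ∨ (∀ i, W' i = ⊥)) :
    ∃! p : {q : Fin r × Fin r // q.1 ≤ q.2},
      ∃ e : ∀ i, V i ≃ₗ[ℂ] intervalSpace p.val.1 p.val.2 i,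
        ∀ (i : Fin r) (h : i.1 + 1 < r) (v : V ⟨i.1 + 1, h⟩),
          e i (x i h v) = intervalMap p.val.1 p.val.2 i h (e ⟨i.1 + 1, h⟩ v) := by

  classical
  obtain ⟨i₀, hi₀⟩ := hnz
  open GabrielAux in
  -- the top of the support
  set S : Finset (Fin r) := Finset.univ.filter (fun i => Nontrivial (V i)) with hS
  have hi₀S : i₀ ∈ S := by simp [hS, hi₀]
  set ℓ : Fin r := S.max' ⟨i₀, hi₀S⟩ with hℓdef
  have hℓS : ℓ ∈ S := S.max'_mem _
  have hℓnt : Nontrivial (V ℓ) := by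
    have := hℓS; rw [hS, Finset.mem_filter] at this; exact this.2
  have htop : ∀ i : Fin r, ℓ.1 < i.1 → ∀ a : V i, a = 0 := by
    intro i hi a
    by_contra ha
    have h1 : i ∈ S := by simp [hS]; exact nontrivial_of_ne a 0 ha
    have h2 := S.le_max' i h1
    rw [← hℓdef] at h2
    have := Fin.le_def.mp h2
    omega
  obtain ⟨vl, hvl⟩ := exists_ne (0 : V ℓ)
  -- the string generated by `vl`
  set v : ∀ i, V i := fun i => GabrielAux.cc V x i ℓ.1 ℓ.isLt vl with hv
  have hvℓ : v ℓ = vl := by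
    simp only [hv]; rw [GabrielAux.cc_self]; rfl
  set T : Finset (Fin r) := Finset.univ.filter (fun i => v i ≠ 0) with hT
  have hℓT : ℓ ∈ T := by simp [hT]; rw [hvℓ]; exact hvl
  set k₀ : Fin r := T.min' ⟨ℓ, hℓT⟩ with hk₀def
  have hk₀ℓ : k₀ ≤ ℓ := T.min'_le ℓ hℓT
  have hvk₀ : v k₀ ≠ 0 := by
    have h1 : k₀ ∈ T := T.min'_mem _
    rw [hT, Finset.mem_filter] at h1
    exact h1.2
  have hmin : ∀ i : Fin r, i.1 < k₀.1 → v i = 0 := by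
    intro i hi
    by_contra h0
    have h1 : i ∈ T := by simp [hT]; exact h0
    have h2 := T.min'_le i h1
    rw [← hk₀def] at h2
    have := Fin.le_def.mp h2
    omega
  -- string identities
  have hvstep : ∀ (i : Fin r) (h : i.1 + 1 < r), i.1 + 1 ≤ ℓ.1 →
      x i h (v ⟨i.1 + 1, h⟩) = v i := by
    intro i h hle
    have hcb := GabrielAux.cc_bot (V := V) (x := x) i h ℓ.1 ℓ.isLt hle
    simp only [hv]
    rw [hcb]
    rfl
  have hvtrans : ∀ i : Fin r, k₀ ≤ i → i ≤ ℓ →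
      GabrielAux.cc V x k₀ i.1 i.isLt (v i) = v k₀ := by
    intro i h1 h2
    have ht := GabrielAux.cc_trans (V := V) (x := x) k₀ i h1 ℓ.1 ℓ.isLt (Fin.le_def.mp h2)
    simp only [hv]
    rw [ht]
    rfl
  have hvne : ∀ i : Fin r, k₀ ≤ i → i ≤ ℓ → v i ≠ 0 := by
    intro i h1 h2 h0
    apply hvk₀
    rw [← hvtrans i h1 h2, h0, map_zero]
  -- the functional
  obtain ⟨lam, hlam⟩ := LinearMap.exists_leftInverse_of_injective
    (LinearMap.toSpanSingleton ℂ (V k₀) (v k₀)) (LinearMap.ker_toSpanSingleton ℂ hvk₀)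
  have hlam1 : lam (v k₀) = 1 := by
    have := LinearMap.congr_fun hlam 1
    simpa [LinearMap.toSpanSingleton_apply_one] using this
  set lamA : ∀ i, V i →ₗ[ℂ] ℂ := fun i => lam.comp (GabrielAux.cc V x k₀ i.1 i.isLt) with hlamA
  have hlamv : ∀ i : Fin r, k₀ ≤ i → i ≤ ℓ → lamA i (v i) = 1 := by
    intro i h1 h2
    simp only [hlamA, LinearMap.comp_apply]
    rw [hvtrans i h1 h2, hlam1]
  have hlamstep : ∀ (i : Fin r) (h : i.1 + 1 < r), k₀.1 ≤ i.1 →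
      ∀ b : V ⟨i.1 + 1, h⟩, lamA ⟨i.1 + 1, h⟩ b = lamA i (x i h b) := by
    intro i h hk b
    simp only [hlamA, LinearMap.comp_apply]
    congr 1
    have hcs := GabrielAux.cc_succ V x k₀ i.1 h hk
    calc GabrielAux.cc V x k₀ (i.1 + 1) h b
        = ((GabrielAux.cc V x k₀ i.1 (by omega)).comp (x ⟨i.1, by omega⟩ h)) b := by rw [hcs]
      _ = GabrielAux.cc V x k₀ i.1 i.isLt (x i h b) := rfl
  -- the two invariant complementary subrepresentations
  set W : ∀ i, Submodule ℂ (V i) := fun i => if k₀ ≤ i ∧ i ≤ ℓ then ℂ ∙ (v i) else ⊥ with hW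
  set W' : ∀ i, Submodule ℂ (V i) :=
    fun i => if k₀ ≤ i ∧ i ≤ ℓ then LinearMap.ker (lamA i) else ⊤ with hW'
  have hWinv : ∀ (i : Fin r) (h : i.1 + 1 < r),
      Submodule.map (x i h) (W ⟨i.1 + 1, h⟩) ≤ W i := by
    intro i h
    by_cases hcj : k₀ ≤ (⟨i.1 + 1, h⟩ : Fin r) ∧ (⟨i.1 + 1, h⟩ : Fin r) ≤ ℓ
    · have hjl : i.1 + 1 ≤ ℓ.1 := by simpa using Fin.le_def.mp hcj.2
      simp only [hW, if_pos hcj]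
      rw [Submodule.map_span, Set.image_singleton, hvstep i h hjl]
      by_cases hci : k₀ ≤ i ∧ i ≤ ℓ
      · rw [if_pos hci]
      · rw [if_neg hci]
        have hik : i.1 < k₀.1 := by
          have hk := Fin.le_def.mp hcj.1
          have hl := Fin.le_def.mp hcj.2
          simp at hk hl
          by_contra hcon
          exact hci ⟨Fin.le_def.mpr (by omega), Fin.le_def.mpr (by omega)⟩
        rw [hmin i hik]
        simp
    · simp only [hW, if_neg hcj, Submodule.map_bot, le_refl, bot_le]
  have hW'inv : ∀ (i : Fin r) (h : i.1 + 1 < r),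
      Submodule.map (x i h) (W' ⟨i.1 + 1, h⟩) ≤ W' i := by
    intro i h
    by_cases hci : k₀ ≤ i
    · by_cases hjl : i.1 + 1 ≤ ℓ.1
      · have hcj : k₀ ≤ (⟨i.1 + 1, h⟩ : Fin r) ∧ (⟨i.1 + 1, h⟩ : Fin r) ≤ ℓ := by
          constructor
          · apply Fin.le_def.mpr; simp; have := Fin.le_def.mp hci; omega
          · apply Fin.le_def.mpr; simpa using hjl
        have hci' : k₀ ≤ i ∧ i ≤ ℓ := ⟨hci, Fin.le_def.mpr (by omega)⟩
        simp only [hW', if_pos hcj, if_pos hci']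
        rintro a ⟨b, hb, rfl⟩
        refine LinearMap.mem_ker.mpr ?_
        rw [← hlamstep i h (Fin.le_def.mp hci) b]
        exact LinearMap.mem_ker.mp hb
      · rintro a ⟨b, hb, rfl⟩
        rw [htop ⟨i.1 + 1, h⟩ (by simp; omega) b, map_zero]
        exact Submodule.zero_mem _
    · have hci' : ¬(k₀ ≤ i ∧ i ≤ ℓ) := fun hc => hci hc.1
      simp only [hW', if_neg hci']
      exact le_top
  have hcompl : ∀ i, IsCompl (W i) (W' i) := by
    intro i
    by_cases hci : k₀ ≤ i ∧ i ≤ ℓ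
    · simp only [hW, hW', if_pos hci]
      exact GabrielAux.isCompl_span_ker (lamA i) (v i) (hlamv i hci.1 hci.2)
    · simp only [hW, hW', if_neg hci]
      exact isCompl_bot_top
  rcases hind W W' hWinv hW'inv hcompl with hL | hR
  · exfalso
    have h1 := hL ℓ
    simp only [hW, if_pos (⟨hk₀ℓ, le_refl ℓ⟩ : k₀ ≤ ℓ ∧ ℓ ≤ ℓ)] at h1
    rw [Submodule.span_singleton_eq_bot] at h1
    exact hvne ℓ hk₀ℓ (le_refl ℓ) h1
  -- conclusions: V is exactly the interval [k₀, ℓ]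
  have hVtop : ∀ i : Fin r, (k₀ ≤ i ∧ i ≤ ℓ) → (ℂ ∙ (v i)) = ⊤ := by
    intro i hc
    have h1 := hcompl i
    rw [hR i] at h1
    have h2 := codisjoint_bot.mp h1.codisjoint
    simpa only [hW, if_pos hc] using h2
  have hVzero : ∀ i : Fin r, ¬(k₀ ≤ i ∧ i ≤ ℓ) → ∀ a : V i, a = 0 := by
    intro i hc a
    have h1 := hR i
    simp only [hW', if_neg hc] at h1
    have h2 : a ∈ (⊤ : Submodule ℂ (V i)) := trivial
    rw [h1] at h2
    simpa using h2
  -- construct the isomorphism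
  have memE : ∀ (i : Fin r) (a : V i), lamA i a ∈ intervalSpace k₀ ℓ i := by
    intro i a
    by_cases hc : k₀ ≤ i ∧ i ≤ ℓ
    · simp only [intervalSpace, if_pos hc]; trivial
    · simp only [intervalSpace, if_neg hc]
      rw [hVzero i hc a, map_zero]
      exact Submodule.zero_mem _
  set E : ∀ i, V i →ₗ[ℂ] intervalSpace k₀ ℓ i :=
    fun i => LinearMap.codRestrict (intervalSpace k₀ ℓ i) (lamA i) (memE i) with hE
  have hEval : ∀ (i : Fin r) (a : V i), (E i a : ℂ) = lamA i a := fun i a => rfl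
  have hbijE : ∀ i, Function.Bijective (E i) := by
    intro i
    by_cases hc : k₀ ≤ i ∧ i ≤ ℓ
    · constructor
      · intro a b hab
        have hmema : a ∈ ℂ ∙ (v i) := by rw [hVtop i hc]; trivial
        have hmemb : b ∈ ℂ ∙ (v i) := by rw [hVtop i hc]; trivial
        obtain ⟨c, rfl⟩ := Submodule.mem_span_singleton.mp hmema
        obtain ⟨d, rfl⟩ := Submodule.mem_span_singleton.mp hmemb
        have h1 : lamA i (c • v i) = lamA i (d • v i) := by
          rw [← hEval, ← hEval, hab]
        rw [map_smul, map_smul, hlamv i hc.1 hc.2, smul_eq_mul, smul_eq_mul, mul_one,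
          mul_one] at h1
        rw [h1]
      · rintro ⟨c, hcmem⟩
        refine ⟨c • v i, ?_⟩
        apply Subtype.ext
        rw [hEval, map_smul, hlamv i hc.1 hc.2, smul_eq_mul, mul_one]
    · have hsub : Subsingleton (V i) := ⟨fun a b => by rw [hVzero i hc a, hVzero i hc b]⟩
      have hsub2 : Subsingleton (intervalSpace k₀ ℓ i) := by
        rw [intervalSpace, if_neg hc]
        infer_instance
      exact ⟨fun a b _ => Subsingleton.elim a b, fun b => ⟨0, Subsingleton.elim _ b⟩⟩
  set e : ∀ i, V i ≃ₗ[ℂ] intervalSpace k₀ ℓ i :=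
    fun i => LinearEquiv.ofBijective (E i) (hbijE i) with he
  have heval : ∀ (i : Fin r) (a : V i), (e i a : ℂ) = lamA i a := fun i a => rfl
  -- the interval map values
  have hIMval : ∀ (i : Fin r) (h : i.1 + 1 < r) (w : intervalSpace k₀ ℓ ⟨i.1 + 1, h⟩),
      (intervalMap k₀ ℓ i h w : ℂ) = if k₀.1 ≤ i.1 ∧ i.1 + 1 ≤ ℓ.1 then (w : ℂ) else 0 := by
    intro i h w
    simp only [intervalMap, LinearMap.coe_mk, AddHom.coe_mk]
    split_ifs with hc
    · rfl
    · rfl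
  refine ⟨⟨(k₀, ℓ), hk₀ℓ⟩, ⟨e, ?_⟩, ?_⟩
  · -- commutation
    intro i h z
    apply Subtype.ext
    rw [heval, hIMval]
    split_ifs with hc
    · rw [← hlamstep i h hc.1 z, heval]
    · by_cases hk : k₀.1 ≤ i.1
      · have hjz : z = 0 := by
          apply hVzero ⟨i.1 + 1, h⟩
          intro hcj
          have := Fin.le_def.mp hcj.2
          simp at this
          exact hc ⟨hk, by omega⟩
        rw [hjz, map_zero, map_zero]
      · simp only [hlamA, LinearMap.comp_apply]
        rw [GabrielAux.cc_junk V x k₀ i.1 i.isLt (by omega), LinearMap.zero_apply, map_zero]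
  · -- uniqueness
    rintro ⟨⟨k, l⟩, hkl⟩ ⟨e', -⟩
    have hiff : ∀ i : Fin r, (k ≤ i ∧ i ≤ l) ↔ (k₀ ≤ i ∧ i ≤ ℓ) := by
      intro i
      constructor
      · intro hc
        by_contra hci
        have h1 : Subsingleton (V i) := ⟨fun a b => by rw [hVzero i hci a, hVzero i hci b]⟩
        have h2 : Nontrivial (intervalSpace k l i) := by
          rw [intervalSpace, if_pos hc]
          exact ⟨⟨0, trivial⟩, ⟨1, trivial⟩, by simp [Subtype.ext_iff]⟩
        have h3 : Nontrivial (V i) := (e' i).toEquiv.nontrivial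
        exact false_of_nontrivial_of_subsingleton (V i)
      · intro hc
        by_contra hci
        have h2 : Subsingleton (intervalSpace k l i) := by
          rw [intervalSpace, if_neg hci]
          infer_instance
        have h3 : Nontrivial (V i) := nontrivial_of_ne (v i) 0 (hvne i hc.1 hc.2)
        have h4 : Nontrivial (intervalSpace k l i) := (e' i).symm.toEquiv.nontrivial
        exact false_of_nontrivial_of_subsingleton (intervalSpace k l i)
    have h5 := (hiff k).mp ⟨le_refl k, hkl⟩
    have h6 := (hiff k₀).mpr ⟨le_refl k₀, hk₀ℓ⟩
    have h7 := (hiff l).mp ⟨hkl, le_refl l⟩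
    have h8 := (hiff ℓ).mpr ⟨hk₀ℓ, le_refl ℓ⟩
    have hk' : k = k₀ := le_antisymm h6.1 h5.1
    have hl' : l = ℓ := le_antisymm h7.2 h8.2
    apply Subtype.ext
    simp [hk', hl']
end
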